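/- Let n and e be integers with 2 < e and e ≤ n, and let U be the uniform matroid of rank n − e + 1 on n elements. Write its coboundary polynomial as χ_U(S,T) = Σ_{j=0}^n χ_j(T) S^j. Then χ_n(T) = 1, χ_j(T) = 0 for n − e < j < n, and for 0 ≤ j ≤ n − e, χ_j(T) = C(n, j) · (T − 1) · Σ_{t=0}^{n−j−e} (−1)^t C(n−j−1, t) T^{n−j−e−t}, where C(·,·) denotes binomial coefficients. -/

import Mathlib

open Matroid Polynomial Finset
open scoped Classical

namespace PaperMatroid

variable {α : Type*}

/-- The rank of a finset in a matroid on a finite type: the maximum size of an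
independent subset. -/
noncomputable def mrk [Fintype α] (M : Matroid α) (x : Finset α) : ℕ :=
  (x.powerset.filter (fun (I : Finset α) => M.Indep (I : Set α))).sup Finset.card

/-- A circuit of a matroid: a minimal dependent set. -/
def IsCircuit (M : Matroid α) (C : Set α) : Prop :=
  M.Dep C ∧ ∀ ⦃D⦄, D ⊂ C → M.Indep D

/-- The girth of a matroid: the minimum size of a circuit. -/
noncomputable def girth (M : Matroid α) : ℕ :=
  sInf {n | ∃ C, IsCircuit M C ∧ C.ncard = n}

/-- The cogirth of a matroid: the girth of the dual matroid, i.e. the minimum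
size of a cocircuit. -/
noncomputable def cogirth (M : Matroid α) : ℕ := girth M✶

/-- The finset of (finsets corresponding to) flats of a matroid on a finite type. -/
noncomputable def flats [Fintype α] (M : Matroid α) : Finset (Finset α) :=
  Finset.univ.filter fun F => M.IsFlat ↑F

/-- The Möbius function of the lattice of flats of a matroid:
`μ(X,X) = 1`, `μ(X,Y) = -Σ_{X ⊆ Z ⊊ Y, Z a flat} μ(X,Z)` for `X ⊊ Y`, and `0` otherwise. -/
noncomputable def mob [Fintype α] (M : Matroid α) (X Y : Finset α) : ℤ :=
  if X = Y then 1
  else if X ⊆ Y then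
    -∑ Z ∈ ((flats M).filter fun Z => X ⊆ Z ∧ Z ⊂ Y).attach, mob M X Z.1
  else 0
termination_by Y.card
decreasing_by
  · have hZ := Z.2
    simp only [Finset.mem_filter] at hZ
    exact Finset.card_lt_card hZ.2.2

/-- The Möbius polynomial of a matroid, as a polynomial in `S` (the outer
variable) whose coefficients are polynomials in `T` (the inner variable):
`μ_M(S,T) = Σ_{x ∈ L} Σ_{x ⊆ y ∈ L} μ(x,y) S^{r(x)} T^{k - r(y)}`,
where `L` is the lattice of flats and `k` is the rank of `M`. -/
noncomputable def mobiusPoly [Fintype α] (M : Matroid α) : Polynomial (Polynomial ℤ) :=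
  ∑ x ∈ flats M, ∑ y ∈ (flats M).filter (fun y => x ⊆ y),
    mob M x y • (Polynomial.X ^ (mrk M x) *
      Polynomial.C (Polynomial.X ^ (mrk M Finset.univ - mrk M y)))

/-- The coboundary polynomial of a matroid, as a polynomial in `S` (the outer
variable) whose coefficients are polynomials in `T` (the inner variable):
`χ_M(S,T) = Σ_{x ∈ L} Σ_{x ⊆ y ∈ L} μ(x,y) S^{|x|} T^{k - r(y)}`,
where `L` is the lattice of flats, `|x|` is the number of ground-set elements
of the flat `x`, and `k` is the rank of `M`. -/
noncomputable def cobPoly [Fintype α] (M : Matroid α) : Polynomial (Polynomial ℤ) :=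
  ∑ x ∈ flats M, ∑ y ∈ (flats M).filter (fun y => x ⊆ y),
    mob M x y • (Polynomial.X ^ x.card *
      Polynomial.C (Polynomial.X ^ (mrk M Finset.univ - mrk M y)))

/-- The uniform matroid of rank `m` on `Fin n`: the independent sets are
exactly the subsets of size at most `m`. -/
noncomputable def unif (n m : ℕ) : Matroid (Fin n) :=
  (IndepMatroid.ofFinite (Set.finite_univ (α := Fin n))
    (fun I => I.ncard ≤ m)
    (by simp)
    (fun I J hJ hIJ => le_trans (Set.ncard_le_ncard hIJ (Set.toFinite J)) hJ)
    (fun I J hI hJ hIJ => by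
      obtain ⟨e, heJ, heI⟩ : ∃ e ∈ J, e ∉ I := by
        by_contra h
        push_neg at h
        exact absurd (Set.ncard_le_ncard h (Set.toFinite I)) (not_le.mpr hIJ)
      refine ⟨e, heJ, heI, ?_⟩
      show (insert e I).ncard ≤ m
      rw [Set.ncard_insert_of_notMem heI (Set.toFinite I)]
      exact le_trans (Nat.succ_le_of_lt hIJ) hJ
    )
    (fun I _ => Set.subset_univ I)).matroid

/-! ### Auxiliary lemmas -/

section Aux
open Finset

-- reindexing between-sums
lemma sum_between {γ β : Type*} [DecidableEq γ] [AddCommMonoid β] (X Y : Finset γ)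
    (hXY : X ⊆ Y) (g : Finset γ → β) :
    ∑ Z ∈ Y.powerset.filter (fun Z => X ⊆ Z), g Z = ∑ W ∈ (Y \ X).powerset, g (X ∪ W) := by
  refine Finset.sum_nbij' (fun Z => Z \ X) (fun W => X ∪ W) ?_ ?_ ?_ ?_ ?_
  · intro Z hZ
    simp only [Finset.mem_filter, Finset.mem_powerset] at hZ ⊢
    exact Finset.sdiff_subset_sdiff hZ.1 Finset.Subset.rfl
  · intro W hW
    simp only [Finset.mem_filter, Finset.mem_powerset] at hW ⊢
    constructor
    · exact Finset.union_subset hXY (hW.trans (Finset.sdiff_subset))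
    · exact Finset.subset_union_left
  · intro Z hZ
    simp only [Finset.mem_filter, Finset.mem_powerset] at hZ
    exact Finset.union_sdiff_of_subset hZ.2
  · intro W hW
    simp only [Finset.mem_powerset] at hW
    show (X ∪ W) \ X = W
    rw [Finset.union_sdiff_cancel_left]
    exact Finset.disjoint_left.2 fun a haX haW => (Finset.mem_sdiff.1 (hW haW)).2 haX
  · intro Z hZ
    simp only [Finset.mem_filter, Finset.mem_powerset] at hZ
    rw [show X ∪ Z \ X = Z from Finset.union_sdiff_of_subset hZ.2]

lemma sum_between_card {γ β : Type*} [DecidableEq γ] [AddCommMonoid β] (X Y : Finset γ)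
    (hXY : X ⊆ Y) (f : ℕ → β) :
    ∑ Z ∈ Y.powerset.filter (fun Z => X ⊆ Z), f Z.card
      = ∑ i ∈ Finset.range ((Y \ X).card + 1), ((Y \ X).card).choose i • f (X.card + i) := by
  rw [sum_between X Y hXY]
  rw [← Finset.sum_powerset_apply_card (fun i => f (X.card + i))]
  refine Finset.sum_congr rfl fun W hW => ?_
  rw [Finset.mem_powerset] at hW
  rw [Finset.card_union_of_disjoint]
  exact Finset.disjoint_left.2 fun a haX haW => (Finset.mem_sdiff.1 (hW haW)).2 haX

-- partial alternating sum of binomial coefficients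
lemma alt_sum (N : ℕ) (hN : 1 ≤ N) (d : ℕ) :
    ∑ i ∈ Finset.range (d + 1), (-1 : ℤ) ^ i * (N.choose i : ℤ)
      = (-1) ^ d * ((N - 1).choose d : ℤ) := by
  induction d with
  | zero => simp
  | succ d ih =>
      rw [Finset.sum_range_succ, ih]
      obtain ⟨N', rfl⟩ := Nat.exists_eq_add_of_le hN
      have hp : (1 + N').choose (d+1) = N'.choose d + N'.choose (d+1) := by
        rw [add_comm 1 N', Nat.choose_succ_succ']
      simp only [Nat.add_sub_cancel_left] at *
      rw [hp]
      push_cast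
      ring

lemma alt_sum_poly (N : ℕ) (hN : 1 ≤ N) (d : ℕ) :
    ∑ i ∈ Finset.range (d + 1), (-1 : Polynomial ℤ) ^ i * (N.choose i : Polynomial ℤ)
      = (-1) ^ d * ((N - 1).choose d : Polynomial ℤ) := by
  have h2 := congrArg (Polynomial.C : ℤ →+* Polynomial ℤ) (alt_sum N hN d)
  simpa [map_sum] using h2

-- the key polynomial identity
lemma PI (N : ℕ) (hN : 1 ≤ N) (d : ℕ) :
    ∑ i ∈ Finset.range (d + 1),
        (-1 : Polynomial ℤ) ^ i * (N.choose i : Polynomial ℤ) * (Polynomial.X ^ (d + 1 - i) - 1)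
      = (Polynomial.X - 1) * ∑ t ∈ Finset.range (d + 1),
          (-1 : Polynomial ℤ) ^ t * ((N - 1).choose t : Polynomial ℤ) * Polynomial.X ^ (d - t) := by
  induction d with
  | zero => simp [mul_comm]
  | succ d ih =>
      have key : ∀ i ∈ Finset.range (d + 1),
          (-1 : Polynomial ℤ) ^ i * (N.choose i : Polynomial ℤ) * (Polynomial.X ^ (d + 1 + 1 - i) - 1)
            = ((-1 : Polynomial ℤ) ^ i * (N.choose i : Polynomial ℤ) * (Polynomial.X ^ (d + 1 - i) - 1)) * Polynomial.X
              + ((-1 : Polynomial ℤ) ^ i * (N.choose i : Polynomial ℤ)) * (Polynomial.X - 1) := by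
        intro i hi
        rw [Finset.mem_range] at hi
        have h1 : d + 1 + 1 - i = (d + 1 - i) + 1 := by omega
        rw [h1, pow_succ]
        ring
      have key2 : ∀ t ∈ Finset.range (d + 1),
          (-1 : Polynomial ℤ) ^ t * ((N-1).choose t : Polynomial ℤ) * Polynomial.X ^ (d + 1 - t)
            = ((-1 : Polynomial ℤ) ^ t * ((N-1).choose t : Polynomial ℤ) * Polynomial.X ^ (d - t)) * Polynomial.X := by
        intro t ht
        rw [Finset.mem_range] at ht
        have h1 : d + 1 - t = (d - t) + 1 := by omega
        rw [h1, pow_succ]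
        ring
      rw [Finset.sum_range_succ, Finset.sum_congr rfl key, Finset.sum_add_distrib,
        ← Finset.sum_mul, ← Finset.sum_mul, ih, alt_sum_poly N hN d,
        Finset.sum_range_succ (n := d + 1), Finset.sum_congr rfl key2, ← Finset.sum_mul]
      have e1 : d + 1 + 1 - (d + 1) = 1 := by omega
      have e2 : d + 1 - (d + 1) = 0 := by omega
      rw [e1, e2]
      have hp : (N.choose (d+1) : Polynomial ℤ)
          = ((N-1).choose d : Polynomial ℤ) + ((N-1).choose (d+1) : Polynomial ℤ) := by
        obtain ⟨N', rfl⟩ := Nat.exists_eq_add_of_le hN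
        have h3 : (1 + N').choose (d+1) = N'.choose d + N'.choose (d+1) := by
          rw [add_comm 1 N', Nat.choose_succ_succ']
        simp only [Nat.add_sub_cancel_left]
        exact_mod_cast congrArg (Nat.cast : ℕ → Polynomial ℤ) h3
      rw [hp]
      ring

end Aux

/-! ### Facts about the uniform matroid -/

section Unif
variable {n m : ℕ}

lemma unif_indep {I : Set (Fin n)} : (unif n m).Indep I ↔ I.ncard ≤ m := by
  rw [unif, IndepMatroid.matroid_indep_iff, IndepMatroid.ofFinite_indep]

lemma unif_indep_finset {I : Finset (Fin n)} : (unif n m).Indep ↑I ↔ I.card ≤ m := by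
  rw [unif_indep, Set.ncard_coe_finset]

lemma unif_ground : (unif n m).E = Set.univ := rfl

lemma mrk_unif (x : Finset (Fin n)) : mrk (unif n m) x = min x.card m := by
  apply le_antisymm
  · apply Finset.sup_le
    intro I hI
    simp only [Finset.mem_filter, Finset.mem_powerset, unif_indep_finset] at hI
    exact le_min (Finset.card_le_card hI.1) hI.2
  · obtain ⟨t, hts, htc⟩ := Finset.exists_subset_card_eq (min_le_left x.card m)
    have hmem : t ∈ x.powerset.filter (fun I : Finset (Fin n) => (unif n m).Indep (I : Set (Fin n))) := by
      simp only [Finset.mem_filter, Finset.mem_powerset, unif_indep_finset]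
      exact ⟨hts, htc.le.trans (min_le_right _ _)⟩
    calc min x.card m = t.card := htc.symm
      _ ≤ _ := Finset.le_sup (f := Finset.card) hmem

lemma mrk_unif_univ (hmn : m ≤ n) : mrk (unif n m) (Finset.univ : Finset (Fin n)) = m := by
  rw [mrk_unif]; simp [hmn]

lemma flat_unif (F : Finset (Fin n)) :
    (unif n m).IsFlat ↑F ↔ F.card < m ∨ F = Finset.univ := by
  set M := unif n m with hM
  have hg : M.E = Set.univ := unif_ground
  have hind : ∀ I : Set (Fin n), M.Indep I ↔ I.ncard ≤ m := fun _ => unif_indep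
  constructor
  · intro hF
    by_contra hc
    push_neg at hc
    obtain ⟨hcard, hne⟩ := hc
    obtain ⟨I, hIF, hIcard⟩ := Finset.exists_subset_card_eq hcard
    have hIind : M.Indep ↑I := (hind _).2 (by rw [Set.ncard_coe_finset, hIcard])
    have hbF : M.IsBasis ↑I ↑F := by
      rw [Matroid.isBasis_iff (by rw [hg]; exact Set.subset_univ _)]
      refine ⟨hIind, by exact_mod_cast hIF, fun J hJ hIJ hJF => ?_⟩
      refine Set.eq_of_subset_of_ncard_le hIJ ?_
      rw [Set.ncard_coe_finset, hIcard]
      exact (hind _).1 hJ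
    have hbU : M.IsBasis ↑I Set.univ := by
      rw [Matroid.isBasis_iff (by rw [hg])]
      refine ⟨hIind, Set.subset_univ _, fun J hJ hIJ hJF => ?_⟩
      refine Set.eq_of_subset_of_ncard_le hIJ ?_
      rw [Set.ncard_coe_finset, hIcard]
      exact (hind _).1 hJ
    have := hF.subset_of_isBasis_of_isBasis hbF hbU
    exact hne (by simpa [Finset.eq_univ_iff_forall, Set.subset_def] using this)
  · rintro (hcard | rfl)
    · constructor
      · intro I X hIF hIX
        intro x hxX
        by_contra hxF
        have hIind := hIF.indep
        have hIsub : I ⊆ ↑F := hIF.subset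
        have hxI : x ∉ I := fun h => hxF (hIsub h)
        have hins : M.Indep (insert x I) := by
          rw [hind]
          rw [Set.ncard_insert_of_notMem hxI (Set.toFinite I)]
          have : I.ncard ≤ F.card := by
            rw [← Set.ncard_coe_finset]
            exact Set.ncard_le_ncard hIsub (Set.toFinite _)
          omega
        have := hIX.eq_of_subset_indep hins (Set.subset_insert _ _)
          (Set.insert_subset hxX hIX.subset)
        exact hxI (this ▸ Set.mem_insert x I)
      · rw [hg]; exact Set.subset_univ _
    · have h3 : (↑(Finset.univ : Finset (Fin n)) : Set (Fin n)) = M.E := by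
        rw [hg, Finset.coe_univ]
      rw [h3]
      exact M.ground_isFlat

lemma mem_flats_unif {F : Finset (Fin n)} :
    F ∈ flats (unif n m) ↔ F.card < m ∨ F = Finset.univ := by
  rw [flats, Finset.mem_filter]
  simp [flat_unif]

end Unif
/-! ### The Möbius function of the uniform matroid -/

section MobUnif
variable {n m : ℕ}

lemma mob_self [Fintype α] (M : Matroid α) (X : Finset α) : mob M X X = 1 := by
  rw [mob]
  exact if_pos rfl

lemma mob_ne (M : Matroid (Fin n)) (X Y : Finset (Fin n)) (h : X ≠ Y) (h2 : X ⊆ Y) :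
    mob M X Y = -∑ Z ∈ ((flats M).filter fun Z => X ⊆ Z ∧ Z ⊂ Y), mob M X Z := by
  rw [mob, if_neg h, if_pos h2, Finset.sum_attach _ (fun Z => mob M X Z)]
  congr!

lemma filter_flats_ssubset_small {Y : Finset (Fin n)} (hY : Y.card < m) (X : Finset (Fin n)) :
    ((flats (unif n m)).filter fun Z => X ⊆ Z ∧ Z ⊂ Y)
      = (Y.powerset.filter (fun Z => X ⊆ Z)).erase Y := by
  ext Z
  simp only [Finset.mem_filter, Finset.mem_erase, Finset.mem_powerset, mem_flats_unif]
  constructor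
  · rintro ⟨_, hXZ, hZY⟩
    exact ⟨hZY.ne, hZY.subset, hXZ⟩
  · rintro ⟨hne, hZY, hXZ⟩
    have hss : Z ⊂ Y := Finset.ssubset_iff_subset_ne.2 ⟨hZY, hne⟩
    exact ⟨Or.inl ((Finset.card_lt_card hss).trans hY), hXZ, hss⟩

lemma full_alt_sum {X Y : Finset (Fin n)} (hXY : X ⊆ Y) (hne : X ≠ Y) :
    ∑ Z ∈ Y.powerset.filter (fun Z => X ⊆ Z), (-1 : ℤ) ^ (Z.card - X.card) = 0 := by
  rw [sum_between_card X Y hXY (fun s => (-1 : ℤ) ^ (s - X.card))]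
  have hc : (Y \ X).card ≠ 0 := by
    rw [Ne, Finset.card_eq_zero, Finset.sdiff_eq_empty_iff_subset]
    intro h
    exact hne (Finset.Subset.antisymm hXY h)
  have halt := Int.alternating_sum_range_choose (n := (Y \ X).card)
  rw [if_neg hc] at halt
  rw [← halt]
  refine Finset.sum_congr rfl fun i _ => ?_
  rw [Nat.add_sub_cancel_left, nsmul_eq_mul, mul_comm]

lemma mob_unif_small : ∀ (k : ℕ) (Y : Finset (Fin n)), Y.card = k → Y.card < m →
    ∀ X, X ⊆ Y → mob (unif n m) X Y = (-1 : ℤ) ^ (Y.card - X.card) := by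
  intro k
  induction k using Nat.strong_induction_on with
  | _ k ih =>
    intro Y hYk hYm X hXY
    by_cases hXY2 : X = Y
    · subst hXY2
      rw [mob_self]
      simp
    · rw [mob_ne _ _ _ hXY2 hXY, filter_flats_ssubset_small hYm X]
      have hYmem : Y ∈ Y.powerset.filter (fun Z => X ⊆ Z) := by
        simp [Finset.mem_filter, Finset.mem_powerset, hXY]
      have hsum : ∑ Z ∈ (Y.powerset.filter (fun Z => X ⊆ Z)).erase Y, mob (unif n m) X Z
          = ∑ Z ∈ (Y.powerset.filter (fun Z => X ⊆ Z)).erase Y, (-1 : ℤ) ^ (Z.card - X.card) := by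
        refine Finset.sum_congr rfl fun Z hZ => ?_
        simp only [Finset.mem_erase, Finset.mem_filter, Finset.mem_powerset] at hZ
        have hss : Z ⊂ Y := Finset.ssubset_iff_subset_ne.2 ⟨hZ.2.1, hZ.1⟩
        have hcard : Z.card < k := hYk ▸ Finset.card_lt_card hss
        exact ih Z.card hcard Z rfl (hcard.trans_le (hYk ▸ hYm.le)) X hZ.2.2
      rw [hsum, Finset.sum_erase_eq_sub hYmem, full_alt_sum hXY hXY2]
      ring

end MobUnif
/-! ### The inner sum computation -/

section Inner
variable {n m : ℕ}

lemma sum_S {β : Type*} [AddCommMonoid β] (hmn : m ≤ n) (x : Finset (Fin n)) (f : ℕ → β) :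
    ∑ y ∈ (Finset.univ : Finset (Fin n)).powerset.filter (fun y => x ⊆ y ∧ y.card < m), f y.card
      = ∑ i ∈ Finset.range (m - x.card), (n - x.card).choose i • f (x.card + i) := by
  have h1 : (Finset.univ : Finset (Fin n)).powerset.filter (fun y => x ⊆ y ∧ y.card < m)
      = ((Finset.univ : Finset (Fin n)).powerset.filter (fun y => x ⊆ y)).filter
          (fun y => y.card < m) := by
    rw [Finset.filter_filter]
  rw [h1, Finset.sum_filter,
    sum_between_card x Finset.univ (Finset.subset_univ x) (fun s => if s < m then f s else 0)]
  have hc : ((Finset.univ : Finset (Fin n)) \ x).card = n - x.card := by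
    rw [Finset.card_sdiff_of_subset (Finset.subset_univ x), Finset.card_univ, Fintype.card_fin]
  rw [hc]
  have hxn : x.card ≤ n := by
    have := Finset.card_le_card (Finset.subset_univ x)
    rwa [Finset.card_univ, Fintype.card_fin] at this
  rw [← Finset.sum_subset (Finset.range_subset_range.2 (by omega : m - x.card ≤ n - x.card + 1))
    (fun i _ hi => ?_)]
  · refine Finset.sum_congr rfl fun i hi => ?_
    rw [Finset.mem_range] at hi
    rw [if_pos (by omega)]
  · rw [Finset.mem_range, not_lt] at hi
    rw [if_neg (by omega), smul_zero]

lemma mob_unif_univ (hmn : m ≤ n) (x : Finset (Fin n)) (hx : x.card < m) :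
    mob (unif n m) x Finset.univ
      = -∑ y ∈ (Finset.univ : Finset (Fin n)).powerset.filter (fun y => x ⊆ y ∧ y.card < m),
          (-1 : ℤ) ^ (y.card - x.card) := by
  have hxu : x ≠ Finset.univ := by
    intro h
    rw [h, Finset.card_univ, Fintype.card_fin] at hx
    omega
  rw [mob_ne _ _ _ hxu (Finset.subset_univ x)]
  have hset : ((flats (unif n m)).filter fun Z => x ⊆ Z ∧ Z ⊂ Finset.univ)
      = (Finset.univ : Finset (Fin n)).powerset.filter (fun y => x ⊆ y ∧ y.card < m) := by
    ext Z
    simp only [Finset.mem_filter, Finset.mem_powerset, mem_flats_unif, Finset.subset_univ,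
      true_and]
    constructor
    · rintro ⟨hfl, hxZ, hss⟩
      rcases hfl with h | rfl
      · exact ⟨hxZ, h⟩
      · exact absurd rfl hss.ne
    · rintro ⟨hxZ, hcard⟩
      refine ⟨Or.inl hcard, hxZ, Finset.ssubset_univ_iff.2 ?_⟩
      intro h
      rw [h, Finset.card_univ, Fintype.card_fin] at hcard
      omega
  rw [hset]
  congr 1
  refine Finset.sum_congr rfl fun Z hZ => ?_
  simp only [Finset.mem_filter, Finset.mem_powerset] at hZ
  exact mob_unif_small Z.card Z rfl hZ.2.2 x hZ.2.1

lemma inner_eq {e j : ℕ} (he : 2 < e) (hje : j + e ≤ n) (hm : m = n - e + 1)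
    (x : Finset (Fin n)) (hxj : x.card = j) :
    ∑ y ∈ (flats (unif n m)).filter (fun y => x ⊆ y),
        mob (unif n m) x y • (Polynomial.X : Polynomial ℤ)
          ^ (mrk (unif n m) Finset.univ - mrk (unif n m) y)
      = (Polynomial.X - 1) * ∑ t ∈ Finset.range (n - j - e + 1),
          (-1 : Polynomial ℤ) ^ t * ((n - j - 1).choose t : Polynomial ℤ)
            * Polynomial.X ^ (n - j - e - t) := by
  have hmn : m ≤ n := by omega
  have hxm : x.card < m := by omega
  have hmj : m - x.card = n - j - e + 1 := by omega
  have hnx : n - x.card = n - j := by omega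
  -- split off the `univ` term
  have hsplit : (flats (unif n m)).filter (fun y => x ⊆ y)
      = insert Finset.univ
          ((Finset.univ : Finset (Fin n)).powerset.filter (fun y => x ⊆ y ∧ y.card < m)) := by
    ext y
    simp only [Finset.mem_filter, Finset.mem_insert, Finset.mem_powerset, mem_flats_unif,
      Finset.subset_univ, true_and]
    constructor
    · rintro ⟨h | rfl, hxy⟩
      · exact Or.inr ⟨hxy, h⟩
      · exact Or.inl rfl
    · rintro (rfl | ⟨hxy, hcard⟩)
      · exact ⟨Or.inr rfl, Finset.subset_univ x⟩
      · exact ⟨Or.inl hcard, hxy⟩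
  have hnotmem : (Finset.univ : Finset (Fin n)) ∉
      (Finset.univ : Finset (Fin n)).powerset.filter (fun y => x ⊆ y ∧ y.card < m) := by
    simp only [Finset.mem_filter, Finset.mem_powerset, Finset.card_univ, Fintype.card_fin]
    omega
  rw [hsplit, Finset.sum_insert hnotmem]
  rw [mrk_unif_univ hmn, Nat.sub_self, pow_zero, mob_unif_univ hmn x hxm]
  -- rewrite the small-flats sum
  have hrest : ∑ y ∈ (Finset.univ : Finset (Fin n)).powerset.filter
        (fun y => x ⊆ y ∧ y.card < m),
        mob (unif n m) x y • (Polynomial.X : Polynomial ℤ) ^ (m - mrk (unif n m) y)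
      = ∑ y ∈ (Finset.univ : Finset (Fin n)).powerset.filter (fun y => x ⊆ y ∧ y.card < m),
          ((-1 : ℤ) ^ (y.card - x.card)) • (Polynomial.X : Polynomial ℤ) ^ (m - y.card) := by
    refine Finset.sum_congr rfl fun y hy => ?_
    simp only [Finset.mem_filter, Finset.mem_powerset] at hy
    rw [mob_unif_small y.card y rfl hy.2.2 x hy.2.1, mrk_unif, min_eq_left hy.2.2.le]
  rw [hrest]
  rw [sum_S hmn x (fun s => ((-1 : ℤ) ^ (s - x.card)) • (Polynomial.X : Polynomial ℤ) ^ (m - s)),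
    sum_S hmn x (fun s => (-1 : ℤ) ^ (s - x.card)), hmj, hnx]
  rw [← PI (n - j) (by omega) (n - j - e)]
  rw [neg_smul, Finset.sum_smul, ← Finset.sum_neg_distrib, ← Finset.sum_add_distrib]
  refine Finset.sum_congr rfl fun i hi => ?_
  rw [Finset.mem_range] at hi
  have h1 : x.card + i - x.card = i := by omega
  have h2 : m - (x.card + i) = n - j - e + 1 - i := by omega
  rw [h1, h2]
  simp only [nsmul_eq_mul, zsmul_eq_mul, smul_eq_mul]
  push_cast
  ring
end Inner
/-! ### Coefficient extraction and the main theorem -/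

section Main
variable {n : ℕ}

lemma coeff_cobPoly (M : Matroid (Fin n)) (j : ℕ) :
    (cobPoly M).coeff j
      = ∑ x ∈ (flats M).filter (fun x => x.card = j),
          ∑ y ∈ (flats M).filter (fun y => x ⊆ y),
            mob M x y • (Polynomial.X : Polynomial ℤ)
              ^ (mrk M Finset.univ - mrk M y) := by
  rw [cobPoly, Polynomial.finset_sum_coeff, Finset.sum_filter]
  refine Finset.sum_congr rfl fun x hx => ?_
  rw [Polynomial.finset_sum_coeff]
  by_cases h : x.card = j
  · rw [if_pos h]
    refine Finset.sum_congr (by congr!) fun y hy => ?_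
    rw [Polynomial.coeff_smul, Polynomial.coeff_mul_C, Polynomial.coeff_X_pow,
      if_pos h.symm, one_mul]
  · rw [if_neg h]
    refine Finset.sum_eq_zero fun y hy => ?_
    rw [Polynomial.coeff_smul, Polynomial.coeff_mul_C, Polynomial.coeff_X_pow,
      if_neg (Ne.symm h), zero_mul, smul_zero]
end Main
/-- Let `2 < e ≤ n` and let `U` be the uniform matroid of rank
`n - e + 1` on `n` elements. Writing `χ_U(S,T) = Σ_{j=0}^n χ_j(T) S^j`:
`χ_n(T) = 1`, `χ_j(T) = 0` for `n - e < j < n`, and for `0 ≤ j ≤ n - e`,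
`χ_j(T) = C(n,j) (T-1) Σ_{t=0}^{n-j-e} (-1)^t C(n-j-1, t) T^(n-j-e-t)`. -/
theorem cobPoly_unif (n e : ℕ) (h2 : 2 < e) (hen : e ≤ n) :
    (cobPoly (unif n (n - e + 1))).coeff n = 1 ∧
    (∀ j : ℕ, n - e < j → j < n → (cobPoly (unif n (n - e + 1))).coeff j = 0) ∧
    (∀ j : ℕ, j ≤ n - e →
      (cobPoly (unif n (n - e + 1))).coeff j =
        (n.choose j : Polynomial ℤ) * ((Polynomial.X - 1) *
          ∑ t ∈ Finset.range (n - j - e + 1),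
            (-1 : Polynomial ℤ) ^ t * ((n - j - 1).choose t : Polynomial ℤ) *
              Polynomial.X ^ (n - j - e - t))) := by
  set m := n - e + 1 with hm
  have hmn : m ≤ n := by omega
  refine ⟨?_, ?_, ?_⟩
  · rw [coeff_cobPoly]
    have hf : (flats (unif n m)).filter (fun x => x.card = n) = {Finset.univ} := by
      ext x
      simp only [Finset.mem_filter, Finset.mem_singleton, mem_flats_unif]
      constructor
      · rintro ⟨_, hc⟩
        apply Finset.eq_univ_of_card
        rw [hc, Fintype.card_fin]
      · rintro rfl
        exact ⟨Or.inr rfl, by rw [Finset.card_univ, Fintype.card_fin]⟩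
    rw [hf, Finset.sum_singleton]
    have hf2 : (flats (unif n m)).filter (fun y => Finset.univ ⊆ y) = {Finset.univ} := by
      ext y
      simp only [Finset.mem_filter, Finset.mem_singleton, mem_flats_unif,
        Finset.univ_subset_iff]
      constructor
      · rintro ⟨_, h⟩
        exact h
      · rintro rfl
        exact ⟨Or.inr rfl, rfl⟩
    rw [hf2, Finset.sum_singleton, mob_self, Nat.sub_self, pow_zero, one_smul]
  · intro j hj1 hj2
    rw [coeff_cobPoly]
    have hf : (flats (unif n m)).filter (fun x => x.card = j) = ∅ := by
      rw [Finset.filter_eq_empty_iff]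
      intro x hx
      rw [mem_flats_unif] at hx
      rcases hx with h | rfl
      · intro hc
        omega
      · intro hc
        rw [Finset.card_univ, Fintype.card_fin] at hc
        omega
    rw [hf, Finset.sum_empty]
  · intro j hj
    rw [coeff_cobPoly]
    have hje : j + e ≤ n := by omega
    have hf : (flats (unif n m)).filter (fun x => x.card = j)
        = Finset.powersetCard j Finset.univ := by
      ext x
      simp only [Finset.mem_filter, mem_flats_unif, Finset.mem_powersetCard_univ]
      constructor
      · rintro ⟨_, h⟩
        exact h
      · intro h
        exact ⟨Or.inl (by omega), h⟩
    rw [hf,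
      Finset.sum_congr rfl
        (fun x hx => inner_eq h2 hje hm x (Finset.mem_powersetCard_univ.1 hx)),
      Finset.sum_const, Finset.card_powersetCard, Finset.card_univ, Fintype.card_fin,
      nsmul_eq_mul]

end PaperMatroid
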